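/- Let k be a field, 𝔤 a Lie algebra over k, 𝔥 an abelian Lie subalgebra of 𝔤, and α : 𝔥 → k a linear functional. Let f ∈ 𝔤 be a nonzero element with [h, f] = α(h)·f for all h ∈ 𝔥, and assume ad(f) is locally nilpotent on 𝔤, so that S = {ι(f)^n : n ∈ ℕ} is an Ore set of regular elements of U(𝔤) and, for every 𝔤-module M, the Ore localization S⁻¹M exists as a module over S⁻¹U(𝔤) and hence over 𝔤. If M is a 𝔤-module that is the direct sum of its 𝔥-weight spaces, then for every linear functional λ : 𝔥 → k such that the λ-weight space of S⁻¹M is nonzero, there exist μ in the support of M and n ∈ ℕ with λ = μ − n·α; that is, supp(S⁻¹M) ⊆ supp(M) + ℤ^{≤0}·α. -/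

import Mathlib

open OreLocalization DirectSum

variable (k : Type*) [Field k] (g : Type*) [LieRing g] [LieAlgebra k g]
  (H : LieSubalgebra k g)
  (M : Type*) [AddCommGroup M] [Module (UniversalEnvelopingAlgebra k g) M]

private lemma indep_aux {ι' N : Type*} [DecidableEq ι'] [AddCommGroup N]
    (A : ι' → AddSubgroup N) (hA : DirectSum.IsInternal A)
    (T : Finset ι') (t : ι' → N) (σ : ι' → ι') (hσ : Set.InjOn σ T)
    (hmem : ∀ μ ∈ T, t μ ∈ A (σ μ)) (hsum : ∑ μ ∈ T, t μ = 0) :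
    ∀ μ ∈ T, t μ = 0 := by
  classical
  intro μ₀ hμ₀
  set z : ⨁ i, A i
    := ∑ μ ∈ T.attach, DirectSum.of (fun i => ↥(A i)) (σ μ) ⟨t μ, hmem μ μ.2⟩ with hz
  have hz0 : z = 0 := by
    apply hA.injective
    rw [map_zero, hz, map_sum]
    simp only [DirectSum.coeAddMonoidHom_of]
    rw [← Finset.sum_attach T t] at hsum
    exact hsum
  have he : z (σ μ₀) = ⟨t μ₀, hmem μ₀ hμ₀⟩ := by
    rw [hz, DFinsupp.finset_sum_apply]
    rw [Finset.sum_eq_single_of_mem (⟨μ₀, hμ₀⟩ : {x // x ∈ T}) (Finset.mem_attach T _)]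
    · exact DirectSum.of_eq_same _ _
    · intro b _ hb
      apply DirectSum.of_eq_of_ne
      intro hcontra
      exact hb (Subtype.ext (hσ b.2 hμ₀ hcontra.symm))
  rw [hz0] at he
  exact congrArg Subtype.val he.symm

private lemma loc_weight' {k A M : Type*} [CommRing k] [Ring A] [Algebra k A]
    [AddCommGroup M] [Module A M]
    (F X : A) [OreSet (Submonoid.powers F)]
    (b c : k) (n : ℕ)
    (hcomm : X * F ^ n = F ^ n * (X + algebraMap k A b))
    (m : M) (s : Submonoid.powers F) (hn : F ^ n = (s : A))
    (hw : (X /ₒ (1 : Submonoid.powers F)) • (m /ₒ s)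
      = ((algebraMap k A c) /ₒ (1 : Submonoid.powers F)) • (m /ₒ s)) :
    ∃ K : ℕ, F ^ K • (X • m - algebraMap k A (c + b) • m) = 0 := by
  have e1 : ((F ^ n : A) /ₒ (1 : Submonoid.powers F)) • (m /ₒ s)
      = m /ₒ (1 : Submonoid.powers F) := by
    rw [hn]; exact OreLocalization.smul_cancel
  set aL : A := algebraMap k A c with haL
  set aB : A := algebraMap k A b with haB
  set aN : A := algebraMap k A (c + b) with haN
  have e2 : (X /ₒ (1 : Submonoid.powers F)) • (m /ₒ (1 : Submonoid.powers F))
      = (aN /ₒ (1 : Submonoid.powers F)) • (m /ₒ (1 : Submonoid.powers F)) := by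
    calc (X /ₒ (1 : Submonoid.powers F)) • (m /ₒ (1 : Submonoid.powers F))
        = (X /ₒ (1 : Submonoid.powers F)) • (((F ^ n : A) /ₒ (1 : Submonoid.powers F)) • (m /ₒ s)) := by
          rw [e1]
      _ = ((X * F ^ n) /ₒ (1 : Submonoid.powers F)) • (m /ₒ s) := by
          rw [← mul_div_one, mul_smul]
      _ = ((F ^ n * (X + aB)) /ₒ (1 : Submonoid.powers F)) • (m /ₒ s) := by rw [hcomm]
      _ = ((F ^ n : A) /ₒ (1 : Submonoid.powers F)) •
            ((X /ₒ (1 : Submonoid.powers F)) • (m /ₒ s)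
              + (aB /ₒ (1 : Submonoid.powers F)) • (m /ₒ s)) := by
          rw [← add_smul, add_oreDiv, ← mul_smul, mul_div_one]
      _ = ((F ^ n : A) /ₒ (1 : Submonoid.powers F)) •
            (((aL + aB) /ₒ (1 : Submonoid.powers F)) • (m /ₒ s)) := by
          rw [hw, ← add_smul, add_oreDiv]
      _ = ((F ^ n * (aL + aB)) /ₒ (1 : Submonoid.powers F)) • (m /ₒ s) := by
          rw [← mul_div_one, mul_smul]
      _ = (((aL + aB) * F ^ n) /ₒ (1 : Submonoid.powers F)) • (m /ₒ s) := by
          rw [haL, haB, ← map_add, Algebra.commutes]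
      _ = (aN /ₒ (1 : Submonoid.powers F)) • (((F ^ n : A) /ₒ (1 : Submonoid.powers F)) • (m /ₒ s)) := by
          rw [← mul_div_one, mul_smul, haN, haL, haB, map_add]
      _ = (aN /ₒ (1 : Submonoid.powers F)) • (m /ₒ (1 : Submonoid.powers F)) := by rw [e1]
  have e3 : (X • m) /ₒ (1 : Submonoid.powers F) = (aN • m) /ₒ (1 : Submonoid.powers F) := by
    rw [← smul_div_one, ← smul_div_one, e2]
  rw [oreDiv_eq_iff] at e3
  obtain ⟨u, v, huv, hu1⟩ := e3
  have huv' : (u : A) = v := by simpa using hu1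
  obtain ⟨K, hK⟩ := u.2
  have hK' : F ^ K = (u : A) := hK
  refine ⟨K, ?_⟩
  rw [hK'.trans huv', smul_sub, sub_eq_zero]
  rw [Submonoid.smul_def, huv'] at huv
  exact huv.symm

private lemma comm_one (α : ↥H →ₗ[k] k) (f : g)
    (hroot : ∀ h : H, ⁅(h : g), f⁆ = α h • f) (h : H) :
    (UniversalEnvelopingAlgebra.ι k (h : g)) * (UniversalEnvelopingAlgebra.ι k f)
      = (UniversalEnvelopingAlgebra.ι k f) * (UniversalEnvelopingAlgebra.ι k (h : g))
        + algebraMap k (UniversalEnvelopingAlgebra k g) (α h) * UniversalEnvelopingAlgebra.ι k f := by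
  have h1 : UniversalEnvelopingAlgebra.ι k ⁅(h : g), f⁆
      = ⁅UniversalEnvelopingAlgebra.ι k (h : g), UniversalEnvelopingAlgebra.ι k f⁆ :=
    by letI : LieRing (UniversalEnvelopingAlgebra k g) := LieRing.ofAssociativeRing; exact LieHom.map_lie _ _ _
  rw [hroot h, map_smul, Ring.lie_def, Algebra.smul_def] at h1
  rw [h1]
  abel

private lemma comm_pow (α : ↥H →ₗ[k] k) (f : g)
    (hroot : ∀ h : H, ⁅(h : g), f⁆ = α h • f) (h : H) :
    ∀ K : ℕ, (UniversalEnvelopingAlgebra.ι k (h : g)) * (UniversalEnvelopingAlgebra.ι k f) ^ K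
      = (UniversalEnvelopingAlgebra.ι k f) ^ K *
        ((UniversalEnvelopingAlgebra.ι k (h : g))
          + algebraMap k (UniversalEnvelopingAlgebra k g) ((K : k) * α h)) := by
  intro K
  induction K with
  | zero => simp
  | succ K IH =>
    set F := UniversalEnvelopingAlgebra.ι k f
    set X := UniversalEnvelopingAlgebra.ι k (h : g)
    calc X * F ^ (K + 1) = (X * F ^ K) * F := by rw [pow_succ, mul_assoc]
      _ = F ^ K * ((X + algebraMap k _ ((K : k) * α h)) * F) := by rw [IH, mul_assoc]
      _ = F ^ K * (X * F + algebraMap k _ ((K : k) * α h) * F) := by rw [add_mul]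
      _ = F ^ K * (F * X + algebraMap k _ (α h) * F + algebraMap k _ ((K : k) * α h) * F) := by
          rw [comm_one k g H α f hroot h]
      _ = F ^ K * (F * (X + algebraMap k _ (((K + 1 : ℕ) : k) * α h))) := by
          have hks : (α h) + (K : k) * α h = ((K + 1 : ℕ) : k) * α h := by push_cast; ring
          rw [Algebra.commutes ((α h : k)) F, Algebra.commutes (((K : k)) * α h) F,
            ← mul_add, ← mul_add, add_assoc, ← map_add, hks]
      _ = F ^ (K + 1) * (X + algebraMap k _ (((K + 1 : ℕ) : k) * α h)) := by
          rw [pow_succ, mul_assoc]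

/-- The `μ`-weight space of the `U(g)`-module `M` with respect to the subalgebra `H`,
as an additive subgroup: `{v : ι(h) • v = μ(h) • v for all h ∈ H}`. -/
def wtAddSubgroup (μ : ↥H →ₗ[k] k) : AddSubgroup M where
  carrier := {v | ∀ h : H, (UniversalEnvelopingAlgebra.ι k (h : g)) • v
      = algebraMap k (UniversalEnvelopingAlgebra k g) (μ h) • v}
  add_mem' := by
    intro a b ha hb h
    rw [smul_add, smul_add, ha h, hb h]
  zero_mem' := by
    intro h
    rw [smul_zero, smul_zero]
  neg_mem' := by
    intro a ha h
    rw [smul_neg, smul_neg, ha h]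


private lemma mem_wt_iff (μ : ↥H →ₗ[k] k) (v : M) :
    v ∈ wtAddSubgroup k g H M μ ↔ ∀ h : H, (UniversalEnvelopingAlgebra.ι k (h : g)) • v
      = algebraMap k (UniversalEnvelopingAlgebra k g) (μ h) • v := Iff.rfl

private lemma central_smul (c : k) (x : UniversalEnvelopingAlgebra k g) (v : M) :
    algebraMap k (UniversalEnvelopingAlgebra k g) c • (x • v)
      = x • (algebraMap k (UniversalEnvelopingAlgebra k g) c • v) := by
  rw [← mul_smul, Algebra.commutes, mul_smul]

private lemma scalar_mem (μ : ↥H →ₗ[k] k) (c : k) (v : M)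
    (hv : v ∈ wtAddSubgroup k g H M μ) :
    algebraMap k (UniversalEnvelopingAlgebra k g) c • v ∈ wtAddSubgroup k g H M μ := by
  rw [mem_wt_iff] at hv ⊢
  intro h
  rw [← central_smul, hv h, central_smul]

private lemma shift_mem (α : ↥H →ₗ[k] k) (f : g)
    (hroot : ∀ h : H, ⁅(h : g), f⁆ = α h • f) (μ : ↥H →ₗ[k] k) (K : ℕ) (v : M)
    (hv : v ∈ wtAddSubgroup k g H M μ) :
    (UniversalEnvelopingAlgebra.ι k f) ^ K • v ∈ wtAddSubgroup k g H M (μ + K • α) := by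
  rw [mem_wt_iff]
  intro h
  have hμ : (μ + K • α) h = μ h + (K : k) * α h := by
    simp [nsmul_eq_mul]
  rw [hμ]
  set F := UniversalEnvelopingAlgebra.ι k f
  set X := UniversalEnvelopingAlgebra.ι k (h : g)
  have hv' := (mem_wt_iff k g H M μ v).mp hv h
  calc X • (F ^ K • v) = (X * F ^ K) • v := by rw [mul_smul]
    _ = (F ^ K * (X + algebraMap k _ ((K : k) * α h))) • v := by
        rw [comm_pow k g H α f hroot h K]
    _ = F ^ K • (X • v + algebraMap k _ ((K : k) * α h) • v) := by rw [mul_smul, add_smul]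
    _ = F ^ K • (algebraMap k _ (μ h) • v + algebraMap k _ ((K : k) * α h) • v) := by rw [hv']
    _ = (F ^ K * algebraMap k _ (μ h + (K : k) * α h)) • v := by
        rw [map_add, mul_smul, add_smul]
    _ = (algebraMap k _ (μ h + (K : k) * α h) * F ^ K) • v := by rw [Algebra.commutes]
    _ = algebraMap k _ (μ h + (K : k) * α h) • (F ^ K • v) := by rw [mul_smul]

/-- Let `k` be a field, `g` a Lie algebra over `k`, `H` an abelian Lie
subalgebra of `g`, and `α : H → k` linear.  Let `f ∈ g` be a nonzero root vector for `α`
(`⁅h, f⁆ = α(h) • f` for `h ∈ H`) with `ad(f)` locally nilpotent on `g`, so that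
`S = {ι(f)^n}` is an Ore set of regular elements of `U(g)` and, for every `g`-module `M`
(i.e. `U(g)`-module), the Ore localization `S⁻¹M` exists.  If `M` is the direct sum of its
`H`-weight spaces, then every weight `lam` in the support of `S⁻¹M` is of the form
`μ - n • α` with `μ ∈ supp M` and `n ∈ ℕ`; that is, `supp S⁻¹M ⊆ supp M + ℤ^{≤0} • α`. -/
theorem stmt_15 [IsLieAbelian ↥H] [DecidableEq (↥H →ₗ[k] k)]
    (α : ↥H →ₗ[k] k) (f : g) (hf0 : f ≠ 0)
    (hroot : ∀ h : H, ⁅(h : g), f⁆ = α h • f)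
    (hnil : ∀ x : g, ∃ N : ℕ, (fun y => ⁅f, y⁆)^[N] x = 0)
    [OreSet (Submonoid.powers (UniversalEnvelopingAlgebra.ι k f))]
    (hM : DirectSum.IsInternal fun μ : ↥H →ₗ[k] k => wtAddSubgroup k g H M μ)
    (lam : ↥H →ₗ[k] k)
    (hlam : ∃ w : OreLocalization
        (Submonoid.powers (UniversalEnvelopingAlgebra.ι k f)) M,
      w ≠ 0 ∧ ∀ h : H,
        ((UniversalEnvelopingAlgebra.ι k (h : g)
            : UniversalEnvelopingAlgebra k g) /ₒ (1 : Submonoid.powers (UniversalEnvelopingAlgebra.ι k f))) • w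
          = ((algebraMap k (UniversalEnvelopingAlgebra k g) (lam h)) /ₒ (1 : Submonoid.powers (UniversalEnvelopingAlgebra.ι k f))) • w) :
    ∃ (μ : ↥H →ₗ[k] k) (n : ℕ),
      (∃ v : M, v ≠ 0 ∧ ∀ h : H,
        (UniversalEnvelopingAlgebra.ι k (h : g)) • v
          = algebraMap k (UniversalEnvelopingAlgebra k g) (μ h) • v) ∧
      lam = μ - (n : ℕ) • α := by
  classical
  obtain ⟨w, hw0, hwt⟩ := hlam
  obtain ⟨m, s, rfl⟩ : ∃ m s, w = m /ₒ s :=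
    OreLocalization.ind (fun r s => ⟨r, s, rfl⟩) w
  obtain ⟨n, hn⟩ := s.2
  have hn' : (UniversalEnvelopingAlgebra.ι k f) ^ n
      = (s : UniversalEnvelopingAlgebra k g) := hn
  obtain ⟨z, hzm⟩ := hM.surjective m
  have hmrep : m = ∑ μ ∈ DFinsupp.support z, ((z μ : M)) := by
    conv_lhs => rw [← hzm, ← DirectSum.sum_support_of z]
    rw [map_sum]
    simp only [DirectSum.coeAddMonoidHom_of]
  have hu : ∀ h : H, ∃ K : ℕ,
      ((UniversalEnvelopingAlgebra.ι k f) ^ K : UniversalEnvelopingAlgebra k g) •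
      ((UniversalEnvelopingAlgebra.ι k (h : g)) • m
        - algebraMap k (UniversalEnvelopingAlgebra k g) (lam h + (n : k) * α h) • m) = 0 := by
    intro h
    exact loc_weight' (UniversalEnvelopingAlgebra.ι k f)
      (UniversalEnvelopingAlgebra.ι k (h : g)) ((n : k) * α h) (lam h) n
      (comm_pow k g H α f hroot h n) m s hn' (hwt h)
  by_cases hgood : ∃ μ₀ ∈ DFinsupp.support z, ∀ K : ℕ,
      ((UniversalEnvelopingAlgebra.ι k f) ^ K : UniversalEnvelopingAlgebra k g)
        • (z μ₀ : M) ≠ 0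
  · obtain ⟨μ₀, hμ₀T, hgoodμ₀⟩ := hgood
    have key : ∀ h : H, μ₀ h = lam h + (n : k) * α h := by
      intro h
      obtain ⟨K, hK⟩ := hu h
      set t : (↥H →ₗ[k] k) → M := fun μ =>
        ((UniversalEnvelopingAlgebra.ι k f) ^ K : UniversalEnvelopingAlgebra k g) •
          ((UniversalEnvelopingAlgebra.ι k (h : g)) • (z μ : M)
            - algebraMap k (UniversalEnvelopingAlgebra k g) (lam h + (n : k) * α h)
              • (z μ : M)) with ht
      have hsum : ∑ μ ∈ DFinsupp.support z, t μ = 0 := by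
        rw [ht]
        rw [← Finset.smul_sum, Finset.sum_sub_distrib, ← Finset.smul_sum, ← Finset.smul_sum,
          ← hmrep]
        exact hK
      have htz := indep_aux (fun μ : ↥H →ₗ[k] k => wtAddSubgroup k g H M μ) hM
        (DFinsupp.support z) t (fun μ => μ + K • α)
        (fun a _ b _ hab => by simpa using add_left_injective (K • α) hab)
        (fun μ hμ => by
          have h1 : (z μ : M) ∈ wtAddSubgroup k g H M μ := (z μ).2
          have h2 : (UniversalEnvelopingAlgebra.ι k (h : g)) • (z μ : M)
              - algebraMap k (UniversalEnvelopingAlgebra k g) (lam h + (n : k) * α h)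
                • (z μ : M) ∈ wtAddSubgroup k g H M μ := by
            rw [(mem_wt_iff k g H M μ (z μ : M)).mp h1 h]
            exact sub_mem (scalar_mem k g H M μ _ _ h1) (scalar_mem k g H M μ _ _ h1)
          exact shift_mem k g H M α f hroot μ K _ h2)
        hsum μ₀ hμ₀T
      by_contra hne
      have hc0 : μ₀ h - (lam h + (n : k) * α h) ≠ 0 := sub_ne_zero.mpr hne
      have h1 : (z μ₀ : M) ∈ wtAddSubgroup k g H M μ₀ := (z μ₀).2
      have h3 : t μ₀ = algebraMap k (UniversalEnvelopingAlgebra k g)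
          (μ₀ h - (lam h + (n : k) * α h)) •
          (((UniversalEnvelopingAlgebra.ι k f) ^ K : UniversalEnvelopingAlgebra k g)
            • (z μ₀ : M)) := by
        rw [ht]
        simp only
        rw [(mem_wt_iff k g H M μ₀ (z μ₀ : M)).mp h1 h, ← sub_smul, ← map_sub, central_smul]
      rw [htz] at h3
      have h4 := congrArg
        (fun x : M => algebraMap k (UniversalEnvelopingAlgebra k g)
          (μ₀ h - (lam h + (n : k) * α h))⁻¹ • x) h3.symm
      simp only [smul_zero, ← mul_smul, ← mul_assoc, ← map_mul, inv_mul_cancel₀ hc0,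
        map_one, one_mul] at h4
      exact hgoodμ₀ K h4
    refine ⟨μ₀, n, ⟨(z μ₀ : M), ?_, ?_⟩, ?_⟩
    · have h5 := hgoodμ₀ 0
      rw [pow_zero, one_smul] at h5
      exact h5
    · exact (mem_wt_iff k g H M μ₀ (z μ₀ : M)).mp (z μ₀).2
    · apply LinearMap.ext
      intro h
      have := key h
      simp only [LinearMap.sub_apply, LinearMap.smul_apply, this, nsmul_eq_mul]
      ring
  · exfalso
    push_neg at hgood
    set Kf : (↥H →ₗ[k] k) → ℕ := fun μ =>
      if hμ : μ ∈ DFinsupp.support z then (hgood μ hμ).choose else 0 with hKf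
    set K := (DFinsupp.support z).sup Kf with hKdef
    have hker : ∀ μ ∈ DFinsupp.support z,
        ((UniversalEnvelopingAlgebra.ι k f) ^ K : UniversalEnvelopingAlgebra k g) • (z μ : M) = 0 := by
      intro μ hμ
      have h1 : Kf μ ≤ K := Finset.le_sup hμ
      have h2 : ((UniversalEnvelopingAlgebra.ι k f) ^ (Kf μ) : UniversalEnvelopingAlgebra k g) • (z μ : M) = 0 := by
        rw [hKf]
        simp only [dif_pos hμ]
        exact (hgood μ hμ).choose_spec
      calc ((UniversalEnvelopingAlgebra.ι k f) ^ K : UniversalEnvelopingAlgebra k g) • (z μ : M)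
          = (((UniversalEnvelopingAlgebra.ι k f) ^ (K - Kf μ) * (UniversalEnvelopingAlgebra.ι k f) ^ (Kf μ)) : UniversalEnvelopingAlgebra k g) • (z μ : M) := by
            rw [← pow_add, Nat.sub_add_cancel h1]
        _ = ((UniversalEnvelopingAlgebra.ι k f) ^ (K - Kf μ) : UniversalEnvelopingAlgebra k g) •
              (((UniversalEnvelopingAlgebra.ι k f) ^ (Kf μ) : UniversalEnvelopingAlgebra k g) • (z μ : M)) := by rw [mul_smul]
        _ = 0 := by rw [h2, smul_zero]
    have hFm : ((UniversalEnvelopingAlgebra.ι k f) ^ K : UniversalEnvelopingAlgebra k g) • m = 0 := by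
      rw [hmrep, Finset.smul_sum]
      exact Finset.sum_eq_zero hker
    have hm0 : m /ₒ (1 : Submonoid.powers (UniversalEnvelopingAlgebra.ι k f)) = 0 := by
      rw [OreLocalization.expand m (1 : Submonoid.powers (UniversalEnvelopingAlgebra.ι k f)) ((UniversalEnvelopingAlgebra.ι k f) ^ K)
        (by rw [OneMemClass.coe_one, mul_one]; exact ⟨K, rfl⟩), hFm, zero_oreDiv]
    apply hw0
    have h4 : ((1 : UniversalEnvelopingAlgebra k g) /ₒ s) • (m /ₒ (1 : Submonoid.powers (UniversalEnvelopingAlgebra.ι k f)))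
        = m /ₒ ((1 : Submonoid.powers (UniversalEnvelopingAlgebra.ι k f)) * s) := OreLocalization.one_div_smul
    rw [hm0, smul_zero, one_mul] at h4
    exact h4.symm
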